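/- (Projection of the doubling shift is a 2-to-1 semiconjugation) Let $\{1,\dots,N\}=\mathcal I_P\sqcup\mathcal I_R$ be a partition, and let $A=(a_{ij})_{i,j=1}^{2N}$ be the 0-1 matrix with $a_{ij}=1$ iff ($i\in\mathcal I_P$ and $1\le j\le N$) or ($i\in\mathcal I_R$ and $N+1\le j\le 2N$) or ($i-N\in\mathcal I_P$ and $N+1\le j\le 2N$) or ($i-N\in\mathcal I_R$ and $1\le j\le N$). Define $\pi:\Sigma_A\to\Sigma_N$ by $\pi(\omega)_n=\omega_n \bmod N$ (with representative in $\{1,\dots,N\}$). Then $\pi$ is continuous, surjective, satisfies $\pi\circ\sigma_A=\sigma\circ\pi$, and every point of $\Sigma_N$ has exactly two $\pi$-preimages in $\Sigma_A$. -/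

import Mathlib

open Set Filter MeasureTheory Topology

noncomputable section

/-- The base space `Σ_N = {1,…,N}^ℤ`. -/
abbrev BSeq (N : ℕ) := ℤ → Fin N

/-- The shift map on bilateral sequences. -/
def shiftSeq {α : Type*} (ξ : ℤ → α) : ℤ → α := fun n => ξ (n + 1)

/-- The unit interval. -/
def I01 : Set ℝ := Set.Icc 0 1

/-- Forward composition of fiber maps: `fw h ξ n = h (ξ (n-1)) ∘ ⋯ ∘ h (ξ 0)`. -/
def fw {α : Type*} (h : α → ℝ → ℝ) (ξ : ℤ → α) : ℕ → ℝ → ℝ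
  | 0 => id
  | n + 1 => fun p => h (ξ (n : ℤ)) (fw h ξ n p)

/-- The step skew-product `F(ξ,p) = (σξ, f_{ξ₀}(p))`. -/
def Fmap {N : ℕ} (f : Fin N → ℝ → ℝ) (z : BSeq N × ℝ) : BSeq N × ℝ :=
  (shiftSeq z.1, f (z.1 0) z.2)


/-- Doubled symbol set `{1,…,2N}`: `(i, false)` is `i`, `(i, true)` is `i + N`. -/
abbrev DSym (N : ℕ) := Fin N × Bool

/-- `A`-admissibility for the orientation-doubling transition matrix, where
`part i = true` iff `f i` is orientation preserving. -/
def Admissible {N : ℕ} (part : Fin N → Bool) (ω : ℤ → DSym N) : Prop :=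
  ∀ n : ℤ, (ω (n + 1)).2 = xor ((ω n).2) (!(part (ω n).1))

/-- The subshift of finite type `Σ_A` of `A`-admissible bilateral sequences. -/
abbrev SigmaA (N : ℕ) (part : Fin N → Bool) := {ω : ℤ → DSym N // Admissible part ω}

/-- The shift map `σ_A` on `Σ_A`. -/
def shiftA {N : ℕ} {part : Fin N → Bool} (ω : SigmaA N part) : SigmaA N part :=
  ⟨shiftSeq ω.1, fun n => ω.2 (n + 1)⟩

/-- The 2-to-1 projection `π : Σ_A → Σ_N`, `π(ω)_n = ω_n mod N`. -/
def piA {N : ℕ} {part : Fin N → Bool} (ω : SigmaA N part) : BSeq N :=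
  fun n => (ω.1 n).1

/-- The reflection `R(x) = 1 - x`. -/
def R : ℝ → ℝ := fun x => 1 - x

/-- The fiber maps of the extended step skew-product:
`g_i = f_i`, `g_{i+N} = R∘f_i∘R` for orientation-preserving `f_i`, and
`g_i = R∘f_i`, `g_{i+N} = f_i∘R` for orientation-reversing `f_i`. -/
def gmap {N : ℕ} (f : Fin N → ℝ → ℝ) (part : Fin N → Bool) : DSym N → ℝ → ℝ :=
  fun s =>
    if part s.1 then (if s.2 then R ∘ f s.1 ∘ R else f s.1)
    else (if s.2 then f s.1 ∘ R else R ∘ f s.1)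

/-- The extended step skew-product `G(ω,x) = (σ_A ω, g_{ω₀}(x))`. -/
def Gmap {N : ℕ} {part : Fin N → Bool} (f : Fin N → ℝ → ℝ)
    (z : SigmaA N part × ℝ) : SigmaA N part × ℝ :=
  (shiftA z.1, gmap f part (z.1.1 0) z.2)

/-- The 2-to-1 projection `Π : Σ_A × I → Σ_N × I`. -/
def PiMap {N : ℕ} {part : Fin N → Bool} (z : SigmaA N part × ℝ) : BSeq N × ℝ :=
  (piA z.1, if (z.1.1 0).2 then R z.2 else z.2)

/-- Orientation hypothesis: `part` records which fiber maps preserve orientation. -/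
def OrientPart {N : ℕ} (f : Fin N → ℝ → ℝ) (part : Fin N → Bool) : Prop :=
  ∀ i, (part i = true → StrictMonoOn (f i) I01) ∧ (part i = false → StrictAntiOn (f i) I01)

namespace PiAAux

variable {N : ℕ} (part : Fin N → Bool) (ξ : BSeq N)

/-- parity accumulated forward from 0 -/
def pos : ℕ → Bool
  | 0 => false
  | k+1 => xor (pos k) (!(part (ξ (k : ℤ))))

/-- parity accumulated backward from 0 -/
def neg : ℕ → Bool
  | 0 => false
  | k+1 => xor (neg k) (!(part (ξ (-(k+1) : ℤ))))

def e : ℤ → Bool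
  | Int.ofNat k => pos part ξ k
  | Int.negSucc k => neg part ξ (k+1)

lemma e_step (n : ℤ) : e part ξ (n + 1) = xor (e part ξ n) (!(part (ξ n))) := by
  cases n with
  | ofNat k =>
    show e part ξ (Int.ofNat (k+1)) = _
    simp only [e, pos]
    norm_num
  | negSucc k =>
    cases k with
    | zero =>
      show e part ξ 0 = _
      simp only [e, pos, neg]
      simp [Bool.xor_assoc]
    | succ m =>
      show e part ξ (Int.negSucc m) = _
      simp only [e, neg]
      rw [Bool.xor_assoc,
        show (-(↑(m+1) + 1) : ℤ) = Int.negSucc (m+1) by simp [Int.negSucc_eq]]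
      simp

def lift (b : Bool) : SigmaA N part :=
  ⟨fun n => (ξ n, xor b (e part ξ n)), by
    intro n
    simp only [e_step, Bool.xor_assoc]⟩

lemma eq_lift (ω : SigmaA N part) (h : piA ω = ξ) :
    ω = lift part ξ ((ω.1 0).2) := by
  have hc : ∀ n : ℤ, (ω.1 n).1 = ξ n := fun n => congrFun h n
  have key : ∀ n : ℤ, (ω.1 n).2 = xor ((ω.1 0).2) (e part ξ n) := by
    intro n
    induction n using Int.induction_on with
    | zero => simp [e, pos]
    | succ k ih =>
      have h2 := ω.2 k
      rw [h2, ih, hc, e_step, Bool.xor_assoc]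
    | pred k ih =>
      have h2 := ω.2 (-(k:ℤ) - 1)
      rw [show (-(k:ℤ) - 1 + 1) = -(k:ℤ) by ring] at h2
      have h3 : (ω.1 (-(k:ℤ) - 1)).2 = xor ((ω.1 (-(k:ℤ))).2) (!(part (ξ (-(k:ℤ) - 1)))) := by
        rw [h2, hc, Bool.xor_assoc, Bool.xor_self, Bool.xor_false]
      rw [h3, ih, Bool.xor_assoc]
      congr 1
      have := e_step part ξ (-(k:ℤ) - 1)
      rw [show (-(k:ℤ) - 1 + 1) = -(k:ℤ) by ring] at this
      rw [this, Bool.xor_assoc, Bool.xor_self, Bool.xor_false]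
  apply Subtype.ext
  funext n
  exact Prod.ext (hc n) (key n)

lemma piA_lift (b : Bool) : piA (lift part ξ b) = ξ := rfl

end PiAAux

/-- **Lemma (doubling projection).** `π : Σ_A → Σ_N` is a continuous surjective
semiconjugation between `σ_A` and `σ`, and every point of `Σ_N` has exactly two
`π`-preimages. -/
theorem piA_two_to_one_semiconjugation {N : ℕ} (part : Fin N → Bool) :
    Continuous (piA (N := N) (part := part)) ∧
    Function.Surjective (piA (N := N) (part := part)) ∧
    (∀ ω : SigmaA N part, piA (shiftA ω) = shiftSeq (piA ω)) ∧
    (∀ ξ : BSeq N, ∃ ω₁ ω₂ : SigmaA N part, ω₁ ≠ ω₂ ∧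
      piA (N := N) (part := part) ⁻¹' {ξ} = {ω₁, ω₂}) := by
  refine ⟨?_, ?_, ?_, ?_⟩
  · exact continuous_pi fun n =>
      (Continuous.fst ((continuous_apply n).comp continuous_subtype_val))
  · exact fun ξ => ⟨PiAAux.lift part ξ false, PiAAux.piA_lift part ξ false⟩
  · intro ω; rfl
  · intro ξ
    refine ⟨PiAAux.lift part ξ false, PiAAux.lift part ξ true, ?_, ?_⟩
    · intro h
      have := congrArg (fun ω : SigmaA N part => (ω.1 0).2) h
      simp [PiAAux.lift, PiAAux.e, PiAAux.pos] at this
    · ext ω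
      simp only [Set.mem_preimage, Set.mem_singleton_iff, Set.mem_insert_iff]
      constructor
      · intro h
        have := PiAAux.eq_lift part ξ ω h
        cases hb : (ω.1 0).2 with
        | false => left; rw [this, hb]
        | true => right; rw [this, hb]
      · rintro (rfl | rfl) <;> exact PiAAux.piA_lift part ξ _
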